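/- Let b_0 = b_1 = 1, b_{2k} = b_{2k+1} = 4^{−k}·binomial(2k,k), and C_6(x) = Σ_{k=0}^{6} (−1)^k b_k cos(kx). Then there exists x ∈ (5π/8, π) such that C_6(x) < (820/33)(1 − cos(x/10)). -/

import Mathlib

open Real

lemma nonneg_of_deriv {f f' : ℝ → ℝ} (hder : ∀ t, HasDerivAt f (f' t) t) (h0 : f 0 = 0)
    (h' : ∀ t, 0 < t → 0 ≤ f' t) {t : ℝ} (ht : 0 ≤ t) : 0 ≤ f t := by
  have hmono : MonotoneOn f (Set.Ici 0) :=
    monotoneOn_of_deriv_nonneg (convex_Ici 0)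
      (fun x _ => (hder x).differentiableAt.continuousAt.continuousWithinAt)
      (fun x _ => (hder x).differentiableAt.differentiableWithinAt)
      (fun x hx => by rw [(hder x).deriv]; exact h' x (by simpa using hx))
  have := hmono Set.self_mem_Ici ht ht
  linarith

lemma sin_lb3 {t : ℝ} (ht : 0 ≤ t) : t - t^3/6 ≤ Real.sin t := by
  have h := nonneg_of_deriv (f := fun t => Real.sin t - t + t^3/6)
    (f' := fun t => Real.cos t - 1 + t^2/2) (fun s => by
      have := ((Real.hasDerivAt_sin s).sub (hasDerivAt_id' (x := s))).add
        ((hasDerivAt_pow 3 s).div_const 6)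
      convert this using 1
      all_goals first
        | rfl
        | (funext y; push_cast; ring)
        | (push_cast; ring)) (by norm_num)
    (fun s _ => by have := Real.one_sub_sq_div_two_le_cos (x := s); linarith) ht
  linarith

lemma cos_ub4 {t : ℝ} (ht : 0 ≤ t) : Real.cos t ≤ 1 - t^2/2 + t^4/24 := by
  have h := nonneg_of_deriv (f := fun t => 1 - t^2/2 + t^4/24 - Real.cos t)
    (f' := fun t => -(t - t^3/6) + Real.sin t) (fun s => by
      have := ((((hasDerivAt_pow 2 s).div_const 2).const_sub 1).add
        ((hasDerivAt_pow 4 s).div_const 24)).sub (Real.hasDerivAt_cos s)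
      convert this using 1
      all_goals first
        | rfl
        | (funext y; push_cast; ring)
        | (push_cast; ring)) (by norm_num)
    (fun s hs => by have := sin_lb3 hs.le; linarith) ht
  linarith

lemma sin_ub5 {t : ℝ} (ht : 0 ≤ t) : Real.sin t ≤ t - t^3/6 + t^5/120 := by
  have h := nonneg_of_deriv (f := fun t => t - t^3/6 + t^5/120 - Real.sin t)
    (f' := fun t => 1 - t^2/2 + t^4/24 - Real.cos t) (fun s => by
      have := (((hasDerivAt_id' (x := s)).sub ((hasDerivAt_pow 3 s).div_const 6)).add
        ((hasDerivAt_pow 5 s).div_const 120)).sub (Real.hasDerivAt_sin s)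
      convert this using 1
      all_goals first
        | rfl
        | (funext y; push_cast; ring)
        | (push_cast; ring)) (by norm_num)
    (fun s hs => by have := cos_ub4 hs.le; linarith) ht
  linarith

lemma cos_lb6 {t : ℝ} (ht : 0 ≤ t) : 1 - t^2/2 + t^4/24 - t^6/720 ≤ Real.cos t := by
  have h := nonneg_of_deriv (f := fun t => Real.cos t - (1 - t^2/2 + t^4/24 - t^6/720))
    (f' := fun t => (t - t^3/6 + t^5/120) - Real.sin t) (fun s => by
      have := (Real.hasDerivAt_cos s).sub
        ((((hasDerivAt_pow 2 s).div_const 2).const_sub 1).add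
          (((hasDerivAt_pow 4 s).div_const 24).sub ((hasDerivAt_pow 6 s).div_const 720)))
      convert this using 1
      all_goals first
        | rfl
        | (funext y; simp only [Pi.add_apply, Pi.sub_apply]; ring)
        | (funext y; push_cast; ring)
        | (push_cast; ring)) (by norm_num)
    (fun s hs => by have := sin_ub5 hs.le; linarith) ht
  linarith

lemma sin_lb7 {t : ℝ} (ht : 0 ≤ t) : t - t^3/6 + t^5/120 - t^7/5040 ≤ Real.sin t := by
  have h := nonneg_of_deriv
    (f := fun t => Real.sin t - (t - t^3/6 + t^5/120 - t^7/5040))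
    (f' := fun t => Real.cos t - (1 - t^2/2 + t^4/24 - t^6/720)) (fun s => by
      have := (Real.hasDerivAt_sin s).sub
        (((hasDerivAt_id' (x := s)).sub ((hasDerivAt_pow 3 s).div_const 6)).add
          (((hasDerivAt_pow 5 s).div_const 120).sub ((hasDerivAt_pow 7 s).div_const 5040)))
      convert this using 1
      all_goals first
        | rfl
        | (funext y; simp only [Pi.add_apply, Pi.sub_apply]; ring)
        | (funext y; push_cast; ring)
        | (push_cast; ring)) (by norm_num)
    (fun s hs => by have := cos_lb6 hs.le; linarith) ht
  linarith

lemma cos_ub8 {t : ℝ} (ht : 0 ≤ t) :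
    Real.cos t ≤ 1 - t^2/2 + t^4/24 - t^6/720 + t^8/40320 := by
  have h := nonneg_of_deriv
    (f := fun t => (1 - t^2/2 + t^4/24 - t^6/720 + t^8/40320) - Real.cos t)
    (f' := fun t => -(t - t^3/6 + t^5/120 - t^7/5040) + Real.sin t) (fun s => by
      have := (((((hasDerivAt_pow 2 s).div_const 2).const_sub 1).add
        (((hasDerivAt_pow 4 s).div_const 24).sub ((hasDerivAt_pow 6 s).div_const 720))).add
        ((hasDerivAt_pow 8 s).div_const 40320)).sub (Real.hasDerivAt_cos s)
      convert this using 1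
      all_goals first
        | rfl
        | (funext y; simp only [Pi.add_apply, Pi.sub_apply]; ring)
        | (funext y; push_cast; ring)
        | (push_cast; ring)) (by norm_num)
    (fun s hs => by have := sin_lb7 hs.le; linarith) ht
  linarith



lemma C6_eq (x : ℝ) : (1:ℝ) - Real.cos x + 1/2 * Real.cos (2*x) - 1/2 * Real.cos (3*x)
    + 3/8 * Real.cos (4*x) - 3/8 * Real.cos (5*x) + 5/16 * Real.cos (6*x)
    = 9/16 - 11/8*Real.cos x + 29/8*Real.cos x^2 + 11/2*Real.cos x^3
      - 12*Real.cos x^4 - 6*Real.cos x^5 + 10*Real.cos x^6 := by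
  set c := Real.cos x with hc
  have e3 : Real.cos (3*x) = 4*c^3 - 3*c := Real.cos_three_mul x
  have e2' : Real.cos (2*x) = 2*c^2 - 1 := Real.cos_two_mul x
  have e4 : Real.cos (4*x) = 2*(2*c^2-1)^2 - 1 := by
    rw [show (4:ℝ)*x = 2*(2*x) by ring, Real.cos_two_mul, e2']
  have e5 : Real.cos (5*x) = 2*(2*(2*c^2-1)^2 - 1)*c - (4*c^3-3*c) := by
    have ha := Real.cos_add (4*x) x
    have hb := Real.cos_sub (4*x) x
    rw [show (4:ℝ)*x + x = 5*x by ring] at ha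
    rw [show (4:ℝ)*x - x = 3*x by ring] at hb
    rw [e3] at hb; rw [e4] at ha hb
    rw [← hc] at ha hb
    linarith
  have e6 : Real.cos (6*x) = 2*(4*c^3-3*c)^2 - 1 := by
    rw [show (6:ℝ)*x = 2*(3*x) by ring, Real.cos_two_mul, e3]
  rw [e2', e3, e4, e5, e6]
  ring

lemma c_bounds : (-0.74745:ℝ) ≤ Real.cos ((483:ℝ)/200) ∧
    Real.cos ((483:ℝ)/200) ≤ -0.74744 := by
  have hq : (0:ℝ) ≤ (483:ℝ)/800 := by norm_num
  have h4l : (0.8232119 : ℝ) ≤ Real.cos ((483:ℝ)/800) := by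
    have h := cos_lb6 hq; nlinarith [h]
  have h4u : Real.cos ((483:ℝ)/800) ≤ 0.8232125 := by
    have h := cos_ub8 hq; nlinarith [h]
  have e2 : Real.cos ((483:ℝ)/400) = 2 * Real.cos ((483:ℝ)/800) ^ 2 - 1 := by
    rw [← Real.cos_two_mul]; norm_num
  have h2l : (0.3553556 : ℝ) ≤ Real.cos ((483:ℝ)/400) := by
    rw [e2]; nlinarith [sq_nonneg (Real.cos ((483:ℝ)/800) - 0.8232119)]
  have h2u : Real.cos ((483:ℝ)/400) ≤ 0.3553577 := by
    rw [e2]; nlinarith [mul_nonneg (sub_nonneg.2 h4u) (sub_nonneg.2 h4l)]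
  have e1 : Real.cos ((483:ℝ)/200) = 2 * Real.cos ((483:ℝ)/400) ^ 2 - 1 := by
    rw [← Real.cos_two_mul]; norm_num
  constructor
  · rw [e1]; nlinarith [sq_nonneg (Real.cos ((483:ℝ)/400) - 0.3553556)]
  · rw [e1]; nlinarith [mul_nonneg (sub_nonneg.2 h2u) (sub_nonneg.2 h2l)]

lemma Q_bound {c : ℝ} (h1l : (-0.74745:ℝ) ≤ c) (h1u : c ≤ -0.74744) :
    9/16 - 11/8*c + 29/8*c^2 + 11/2*c^3 - 12*c^4 - 6*c^5 + 10*c^6 ≤ 0.7172 := by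
  have p2l : (0.558666:ℝ) ≤ c^2 := by nlinarith [sq_nonneg (c + 0.74744)]
  have p2u : c^2 ≤ (0.558682:ℝ) := by
    nlinarith [mul_nonneg (sub_nonneg.2 h1u) (by linarith : (0:ℝ) ≤ c - (-0.74745))]
  have p3l : (-0.417587:ℝ) ≤ c^3 := by
    nlinarith [mul_le_mul_of_nonneg_right h1l (sq_nonneg c), p2u]
  have p3u : c^3 ≤ (-0.41756:ℝ) := by
    nlinarith [mul_le_mul_of_nonneg_right h1u (sq_nonneg c), p2l]
  have h4nn : (0:ℝ) ≤ c^4 := by positivity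
  have p4l : (0.312107:ℝ) ≤ c^4 := by nlinarith [sq_nonneg (c^2 - 0.558666), p2l]
  have p4u : c^4 ≤ (0.312126:ℝ) := by
    nlinarith [mul_nonneg (sub_nonneg.2 p2u) (sub_nonneg.2 p2l)]
  have p5l : (-0.233299:ℝ) ≤ c^5 := by
    nlinarith [mul_le_mul_of_nonneg_right h1l h4nn, p4u]
  have p5u : c^5 ≤ (-0.233281:ℝ) := by
    nlinarith [mul_le_mul_of_nonneg_right h1u h4nn, p4l]
  have p6l : (0.174356:ℝ) ≤ c^6 := by
    nlinarith [sq_nonneg (c^3 - (-0.41756)), p3u]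
  have p6u : c^6 ≤ (0.174379:ℝ) := by
    nlinarith [mul_nonneg (sub_nonneg.2 p3u) (sub_nonneg.2 p3l)]
  linarith

noncomputable def b (k : ℕ) : ℝ := (Nat.choose (2*(k/2)) (k/2) : ℝ) / 4^(k/2)

noncomputable def C6 (x : ℝ) : ℝ :=
  ∑ k ∈ Finset.range 7, (-1)^k * b k * cos (k * x)

theorem lemma7_fails_n6 : ∃ x ∈ Set.Ioo (5 * π / 8) π,
    C6 x < (820/33) * (1 - cos (x/10)) := by
  refine ⟨483/200, ⟨?_, ?_⟩, ?_⟩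
  · have := Real.pi_lt_d2; linarith
  · have := Real.pi_gt_d6; linarith
  have hC : C6 ((483:ℝ)/200) = 9/16 - 11/8*Real.cos ((483:ℝ)/200)
      + 29/8*Real.cos ((483:ℝ)/200)^2 + 11/2*Real.cos ((483:ℝ)/200)^3
      - 12*Real.cos ((483:ℝ)/200)^4 - 6*Real.cos ((483:ℝ)/200)^5
      + 10*Real.cos ((483:ℝ)/200)^6 := by
    rw [← C6_eq ((483:ℝ)/200)]
    simp only [C6, Finset.sum_range_succ, b]
    norm_num [Nat.choose]
    ring_nf
  rw [hC]
  obtain ⟨h1l, h1u⟩ := c_bounds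
  have hQ := Q_bound h1l h1u
  have h10 : Real.cos ((483:ℝ)/200/10) ≤ 1 - (483/2000:ℝ)^2/2 + (483/2000:ℝ)^4/24 := by
    rw [show (483:ℝ)/200/10 = 483/2000 by norm_num]
    exact cos_ub4 (by norm_num)
  nlinarith [hQ, h10]
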